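/- arXiv:2011.11298 — 3 statements merged into one kernel-verified Lean document; each statement's English description precedes it below -/
import Mathlib

section
/- Let p, q > 0 and β₁, β₂ > 0, and let μ be the pushforward of the Beta(p, q) probability measure on ℝ under the affine map x ↦ -β₁ + (β₁ + β₂)·x. Then for every z with -β₁ ≤ z < β₂, μ((-∞, z]) = (Γ(p+q)/(Γ(p)·Γ(q))) · ∫₀^((z+β₁)/(β₂-z)) s^(p-1) · (1+s)^(-(p+q)) ds. -/
open MeasureTheory Real

/-- The Beta(p,q) probability measure on ℝ: the measure supported on `[0,1]` with density
`x ↦ Γ(p+q)/(Γ(p)Γ(q)) * x^(p-1) * (1-x)^(q-1)` with respect to Lebesgue measure. -/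
noncomputable def betaMeasure (p q : ℝ) : Measure ℝ :=
  volume.withDensity (fun x => ENNReal.ofReal (Set.indicator (Set.Icc (0:ℝ) 1)
    (fun x => Real.Gamma (p + q) / (Real.Gamma p * Real.Gamma q)
      * x ^ (p - 1) * (1 - x) ^ (q - 1)) x))

lemma cov_aux (p q t T : ℝ) (ht0 : 0 ≤ t) (ht1 : t < 1)
    (hT : T = t / (1 - t)) :
    ∫ x in Set.Ioc 0 t, x ^ (p-1) * (1-x) ^ (q-1)
      = ∫ s in Set.Ioc 0 T, s ^ (p-1) * (1+s) ^ (-(p+q)) := by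
  have h1t : 0 < 1 - t := by linarith
  have hT0 : 0 ≤ T := by rw [hT]; positivity
  have himg : (fun s : ℝ => s / (1+s)) '' Set.Ioc 0 T = Set.Ioc 0 t := by
    ext x
    constructor
    · rintro ⟨s, ⟨hs0, hsT⟩, rfl⟩
      have h1s : 0 < 1 + s := by linarith
      constructor
      · positivity
      · subst hT
        show s / (1+s) ≤ t
        rw [div_le_iff₀ h1s]
        rw [le_div_iff₀ h1t] at hsT
        nlinarith
    · rintro ⟨hx0, hxt⟩
      have hx1 : x < 1 := lt_of_le_of_lt hxt ht1
      have h1x : 0 < 1 - x := by linarith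
      refine ⟨x / (1-x), ⟨by positivity, ?_⟩, ?_⟩
      · rw [hT, div_le_div_iff₀ h1x h1t]
        nlinarith
      · show x / (1-x) / (1 + x / (1-x)) = x
        rw [show 1 + x / (1-x) = 1/(1-x) by field_simp; ring]
        field_simp
  rw [← himg,
    integral_image_eq_integral_abs_deriv_smul measurableSet_Ioc
      (f' := fun s => ((1+s)^2)⁻¹)
      (fun s hs => by
        have h1s : (1:ℝ) + s ≠ 0 := by have := hs.1; intro h; linarith
        have : HasDerivAt (fun s : ℝ => s / (1+s)) (((1+s)^2)⁻¹) s := by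
          have := (hasDerivAt_id s).div ((hasDerivAt_id s).const_add 1) h1s
          convert this using 1
          · rfl
          · rfl
          · rfl
          · simp only [id]
            field_simp
            ring
        exact this.hasDerivWithinAt)
      (fun a ha b hb hab => by
        have h1a : (0:ℝ) < 1 + a := by have := ha.1; linarith
        have h1b : (0:ℝ) < 1 + b := by have := hb.1; linarith
        rw [div_eq_div_iff h1a.ne' h1b.ne'] at hab
        nlinarith)]
  refine setIntegral_congr_fun measurableSet_Ioc (fun s hs => ?_)
  have hs0 : 0 < s := hs.1
  have h1s : (0:ℝ) < 1 + s := by linarith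
  have e1 : 1 - s / (1+s) = (1+s)⁻¹ := by field_simp; ring
  rw [smul_eq_mul, abs_of_pos (by positivity), e1,
    Real.div_rpow hs0.le h1s.le, Real.inv_rpow h1s.le]
  rw [show ((1+s)^2)⁻¹ = (1+s) ^ (-(2:ℝ)) by
    rw [Real.rpow_neg h1s.le, Real.rpow_two]]
  rw [show -(p+q) = -2 + (-(p-1)) + (-(q-1)) by ring,
    Real.rpow_add h1s, Real.rpow_add h1s,
    Real.rpow_neg h1s.le (p-1), Real.rpow_neg h1s.le (q-1)]
  field_simp

theorem stmt_3 (p q β₁ β₂ : ℝ) (hp : 0 < p) (hq : 0 < q) (hβ₁ : 0 < β₁) (hβ₂ : 0 < β₂)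
    (μ : Measure ℝ) (hμ : μ = Measure.map (fun x => -β₁ + (β₁ + β₂) * x) (betaMeasure p q)) :
    ∀ z, -β₁ ≤ z → z < β₂ →
      μ (Set.Iic z) = ENNReal.ofReal (Real.Gamma (p + q) / (Real.Gamma p * Real.Gamma q)
        * ∫ s in (0:ℝ)..((z + β₁) / (β₂ - z)), s ^ (p - 1) * (1 + s) ^ (-(p + q))) := by
  intro z hz1 hz2
  set C := Real.Gamma (p + q) / (Real.Gamma p * Real.Gamma q) with hC
  have hC0 : 0 ≤ C := by
    have := Real.Gamma_pos_of_pos (by linarith : 0 < p + q)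
    have := Real.Gamma_pos_of_pos hp
    have := Real.Gamma_pos_of_pos hq
    positivity
  have hb : 0 < β₁ + β₂ := by linarith
  have hbz : 0 < β₂ - z := by linarith
  set t := (z + β₁) / (β₁ + β₂) with ht
  set T := (z + β₁) / (β₂ - z) with hTdef
  have ht0 : 0 ≤ t := div_nonneg (by linarith) hb.le
  have ht1 : t < 1 := by rw [ht, div_lt_one hb]; linarith
  have hT : T = t / (1 - t) := by
    rw [hTdef, ht, one_sub_div hb.ne',
      show β₁ + β₂ - (z + β₁) = β₂ - z by ring,
      div_div_div_eq, div_eq_div_iff (by positivity) (by positivity)]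
    ring
  have hT0 : 0 ≤ T := div_nonneg (by linarith) hbz.le
  -- step 1: reduce to betaMeasure of Iic t
  have hmeas : Measurable fun x : ℝ => -β₁ + (β₁ + β₂) * x := by fun_prop
  have hpre : (fun x : ℝ => -β₁ + (β₁ + β₂) * x) ⁻¹' Set.Iic z = Set.Iic t := by
    ext x
    simp only [Set.mem_preimage, Set.mem_Iic, ht]
    rw [le_div_iff₀ hb]
    constructor <;> intro <;> nlinarith
  rw [hμ, Measure.map_apply hmeas measurableSet_Iic, hpre]
  -- step 2: compute betaMeasure of Iic t
  rw [betaMeasure, withDensity_apply _ measurableSet_Iic]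
  have hind : ∀ x : ℝ, ENNReal.ofReal (Set.indicator (Set.Icc (0:ℝ) 1)
      (fun x => C * x ^ (p - 1) * (1 - x) ^ (q - 1)) x)
      = Set.indicator (Set.Icc (0:ℝ) 1)
        (fun x => ENNReal.ofReal (C * x ^ (p - 1) * (1 - x) ^ (q - 1))) x := by
    intro x
    rw [Set.indicator_apply, Set.indicator_apply]
    split <;> simp
  simp only [← hC, hind]
  rw [lintegral_indicator measurableSet_Icc, Measure.restrict_restrict measurableSet_Icc]
  have hset : Set.Icc (0:ℝ) 1 ∩ Set.Iic t = Set.Icc 0 t := by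
    ext x
    simp only [Set.mem_inter_iff, Set.mem_Icc, Set.mem_Iic]
    constructor
    · rintro ⟨⟨h1, h2⟩, h3⟩; exact ⟨h1, h3⟩
    · rintro ⟨h1, h3⟩; exact ⟨⟨h1, by linarith⟩, h3⟩
  rw [hset]
  -- step 3: convert to Bochner integral
  have hint : IntegrableOn (fun x => C * x ^ (p - 1) * (1 - x) ^ (q - 1)) (Set.Icc 0 t) := by
    rw [integrableOn_Icc_iff_integrableOn_Ioc, ← intervalIntegrable_iff_integrableOn_Ioc_of_le ht0]
    have h1 : IntervalIntegrable (fun x : ℝ => C * x ^ (p-1)) volume 0 t :=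
      (intervalIntegral.intervalIntegrable_rpow' (by linarith)).const_mul C
    have h2 : ContinuousOn (fun x : ℝ => (1-x) ^ (q-1)) (Set.uIcc 0 t) := by
      apply ContinuousOn.rpow_const (by fun_prop)
      intro x hx
      rw [Set.uIcc_of_le ht0] at hx
      left
      have := hx.2
      intro h; nlinarith [hx.1, hx.2]
    exact h1.mul_continuousOn h2
  have hnn : 0 ≤ᵐ[volume.restrict (Set.Icc (0:ℝ) t)]
      (fun x => C * x ^ (p - 1) * (1 - x) ^ (q - 1)) := by
    filter_upwards [ae_restrict_mem measurableSet_Icc] with x hx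
    have h1 : (0:ℝ) ≤ x := hx.1
    have h2 : (0:ℝ) ≤ 1 - x := by have := hx.2; linarith
    positivity
  rw [← ofReal_integral_eq_lintegral_ofReal hint hnn]
  -- step 4: the integral identity
  congr 1
  rw [intervalIntegral.integral_of_le hT0, ← cov_aux p q t T ht0 ht1 hT,
    ← integral_Icc_eq_integral_Ioc]
  simp only [mul_assoc]
  rw [MeasureTheory.integral_const_mul]
end

section
/- Let p, q > 0 and β₁, β₂ > 0, and let μ be the pushforward of the Beta(p, q) probability measure on ℝ under the affine map x ↦ -β₁ + (β₁ + β₂)·x. Then μ((-∞, 0]) = (Γ(p+q)/(Γ(p)·Γ(q))) · ∫₀^(β₁/β₂) s^(p-1) · (1+s)^(-(p+q)) ds. -/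
open MeasureTheory Real

theorem stmt_4 (p q β₁ β₂ : ℝ) (hp : 0 < p) (hq : 0 < q) (hβ₁ : 0 < β₁) (hβ₂ : 0 < β₂)
    (μ : Measure ℝ) (hμ : μ = Measure.map (fun x => -β₁ + (β₁ + β₂) * x) (betaMeasure p q)) :
    μ (Set.Iic 0) = ENNReal.ofReal (Real.Gamma (p + q) / (Real.Gamma p * Real.Gamma q)
      * ∫ s in (0:ℝ)..(β₁ / β₂), s ^ (p - 1) * (1 + s) ^ (-(p + q))) := by
  have hβ : 0 < β₁ + β₂ := by linarith
  set C := Real.Gamma (p + q) / (Real.Gamma p * Real.Gamma q) with hCdef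
  have hC : 0 < C := by
    have h1 := Real.Gamma_pos_of_pos hp
    have h2 := Real.Gamma_pos_of_pos hq
    have h3 := Real.Gamma_pos_of_pos (add_pos hp hq)
    positivity
  set t := β₁ / (β₁ + β₂) with htdef
  set r := β₁ / β₂ with hrdef
  have ht0 : 0 < t := div_pos hβ₁ hβ
  have ht1 : t < 1 := (div_lt_one hβ).2 (by linarith)
  have hr0 : 0 < r := div_pos hβ₁ hβ₂
  -- Step 1: push forward
  have hmap : μ (Set.Iic 0) = betaMeasure p q (Set.Iic t) := by
    rw [hμ, Measure.map_apply (by fun_prop) measurableSet_Iic]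
    congr 1
    ext x
    simp only [Set.mem_preimage, Set.mem_Iic]
    rw [htdef, le_div_iff₀ hβ]
    constructor <;> intro h <;> nlinarith
  -- Step 2: express as lintegral over Ioo 0 t
  have hbeta : betaMeasure p q (Set.Iic t)
      = ∫⁻ x in Set.Ioo (0:ℝ) t, ENNReal.ofReal (C * x ^ (p-1) * (1-x) ^ (q-1)) := by
    rw [betaMeasure, withDensity_apply _ measurableSet_Iic]
    have heq : ∀ x : ℝ, ENNReal.ofReal (Set.indicator (Set.Icc (0:ℝ) 1)
        (fun x => C * x ^ (p-1) * (1-x) ^ (q-1)) x)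
        = Set.indicator (Set.Icc (0:ℝ) 1)
          (fun x => ENNReal.ofReal (C * x ^ (p-1) * (1-x) ^ (q-1))) x := by
      intro x
      by_cases hx : x ∈ Set.Icc (0:ℝ) 1 <;> simp [hx]
    simp_rw [← hCdef, heq]
    rw [lintegral_indicator measurableSet_Icc _,
      Measure.restrict_restrict measurableSet_Icc]
    have : Set.Icc (0:ℝ) 1 ∩ Set.Iic t = Set.Icc 0 t := by
      ext x
      simp only [Set.mem_inter_iff, Set.mem_Icc, Set.mem_Iic]
      constructor
      · rintro ⟨⟨h1, _⟩, h3⟩; exact ⟨h1, h3⟩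
      · rintro ⟨h1, h2⟩; exact ⟨⟨h1, h2.trans ht1.le⟩, h2⟩
    rw [this, ← Measure.restrict_congr_set Ioo_ae_eq_Icc]
  -- Integrability of the density on Ioo 0 t
  have hf_meas : Measurable (fun x : ℝ => x ^ (p-1) * (1-x) ^ (q-1)) := by fun_prop
  have hrpow_int : IntegrableOn (fun x : ℝ => x ^ (p-1)) (Set.Ioo 0 t) := by
    have h := (intervalIntegral.intervalIntegrable_rpow'
      (show (-1:ℝ) < p - 1 by linarith) (a := 0) (b := t))
    rw [intervalIntegrable_iff_integrableOn_Ioc_of_le ht0.le] at h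
    exact h.mono_set Set.Ioo_subset_Ioc_self
  set K := max ((1 - t) ^ (q-1)) 1 with hKdef
  have hK0 : 0 ≤ K := le_trans zero_le_one (le_max_right _ _)
  have hKbound : ∀ x ∈ Set.Ioo (0:ℝ) t, (1-x) ^ (q-1) ≤ K := by
    intro x hx
    have hx1 : 0 < 1 - x := by linarith [hx.2]
    have hx2 : 1 - t ≤ 1 - x := by linarith [hx.2]
    rcases le_or_gt 1 q with hq1 | hq1
    · refine le_trans ?_ (le_max_right _ _)
      exact Real.rpow_le_one hx1.le (by linarith [hx.1]) (by linarith)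
    · refine le_trans ?_ (le_max_left _ _)
      rw [show q - 1 = -(1 - q) by ring, Real.rpow_neg hx1.le,
        Real.rpow_neg (by linarith : (0:ℝ) ≤ 1 - t)]
      have hposx : 0 < (1 - x) ^ (1 - q) := Real.rpow_pos_of_pos hx1 _
      have hpost : 0 < (1 - t) ^ (1 - q) := Real.rpow_pos_of_pos (by linarith) _
      exact inv_anti₀ hpost (Real.rpow_le_rpow (by linarith) hx2 (by linarith))
  have hf_int : IntegrableOn (fun x : ℝ => x ^ (p-1) * (1-x) ^ (q-1)) (Set.Ioo 0 t) := by
    refine Integrable.mono' (hrpow_int.const_mul K) hf_meas.aestronglyMeasurable ?_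
    filter_upwards [ae_restrict_mem measurableSet_Ioo] with x hx
    have hx0 : (0:ℝ) ≤ x := hx.1.le
    have h1 : 0 ≤ x ^ (p-1) := Real.rpow_nonneg hx0 _
    have h2 : 0 ≤ (1-x) ^ (q-1) := Real.rpow_nonneg (by linarith [hx.2]) _
    rw [Real.norm_eq_abs, abs_of_nonneg (mul_nonneg h1 h2)]
    calc x ^ (p-1) * (1-x) ^ (q-1) ≤ x ^ (p-1) * K :=
          mul_le_mul_of_nonneg_left (hKbound x hx) h1
      _ = K * x ^ (p-1) := mul_comm _ _
  -- Step 3: to a Bochner integral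
  have hofReal : (∫⁻ x in Set.Ioo (0:ℝ) t, ENNReal.ofReal (C * x ^ (p-1) * (1-x) ^ (q-1)))
      = ENNReal.ofReal (C * ∫ x in Set.Ioo (0:ℝ) t, x ^ (p-1) * (1-x) ^ (q-1)) := by
    rw [← integral_const_mul]
    rw [← ofReal_integral_eq_lintegral_ofReal]
    · congr 1
      apply setIntegral_congr_fun measurableSet_Ioo
      intro x _; ring
    · exact (hf_int.const_mul C).congr (Filter.Eventually.of_forall fun x => by ring)
    · filter_upwards [ae_restrict_mem measurableSet_Ioo] with x hx
      have h1 : 0 ≤ x ^ (p-1) := Real.rpow_nonneg hx.1.le _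
      have h2 : 0 ≤ (1-x) ^ (q-1) := Real.rpow_nonneg (by linarith [hx.2]) _
      positivity
  -- Step 4: substitution x = s/(1+s)
  have himage : (fun s : ℝ => s / (1 + s)) '' Set.Ioo 0 r = Set.Ioo 0 t := by
    ext y
    simp only [Set.mem_image, Set.mem_Ioo]
    constructor
    · rintro ⟨s, ⟨hs0, hsr⟩, rfl⟩
      have h1s : 0 < 1 + s := by linarith
      constructor
      · positivity
      · rw [htdef, div_lt_div_iff₀ h1s hβ]
        rw [hrdef, lt_div_iff₀ hβ₂] at hsr
        nlinarith
    · rintro ⟨hy0, hyt⟩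
      have hy1 : y < 1 := hyt.trans ht1
      have h1y : 0 < 1 - y := by linarith
      refine ⟨y / (1 - y), ⟨by positivity, ?_⟩, ?_⟩
      · rw [hrdef, div_lt_div_iff₀ h1y hβ₂]
        rw [htdef, lt_div_iff₀ hβ] at hyt
        nlinarith
      · field_simp; ring
  have hderiv : ∀ s ∈ Set.Ioo (0:ℝ) r,
      HasDerivWithinAt (fun s : ℝ => s / (1 + s)) (((1 + s) ^ 2)⁻¹) (Set.Ioo 0 r) s := by
    intro s hs
    have h1s : (1:ℝ) + s ≠ 0 := by nlinarith [hs.1]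
    have := (hasDerivAt_id s).div ((hasDerivAt_const s (1:ℝ)).add (hasDerivAt_id s)) h1s
    exact this.hasDerivWithinAt.congr_deriv (by simp only [Pi.add_apply, id_eq]; ring)
  have hinj : Set.InjOn (fun s : ℝ => s / (1 + s)) (Set.Ioo 0 r) := by
    intro a ha b hb hab
    have h1a : (1:ℝ) + a ≠ 0 := by nlinarith [ha.1]
    have h1b : (1:ℝ) + b ≠ 0 := by nlinarith [hb.1]
    field_simp at hab
    linarith
  have hsubst : (∫ x in Set.Ioo (0:ℝ) t, x ^ (p-1) * (1-x) ^ (q-1))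
      = ∫ s in Set.Ioo (0:ℝ) r, s ^ (p-1) * (1+s) ^ (-(p+q)) := by
    rw [← himage,
      integral_image_eq_integral_abs_deriv_smul measurableSet_Ioo hderiv hinj]
    apply setIntegral_congr_fun measurableSet_Ioo
    intro s hs
    have hs0 : 0 < s := hs.1
    have h1s : 0 < 1 + s := by linarith
    have e1 : (1:ℝ) - s / (1 + s) = (1 + s)⁻¹ := by field_simp; ring
    have e2 : s / (1 + s) = s * (1 + s)⁻¹ := div_eq_mul_inv s _
    simp only [smul_eq_mul]
    rw [abs_of_pos (by positivity : (0:ℝ) < ((1 + s) ^ 2)⁻¹), e1, e2]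
    rw [Real.mul_rpow hs0.le (by positivity), ← Real.rpow_neg_one (1 + s),
      ← Real.rpow_natCast (1 + s) 2, ← Real.rpow_neg h1s.le,
      ← Real.rpow_mul h1s.le, ← Real.rpow_mul h1s.le]
    rw [show ((-1:ℝ)) * (p - 1) = 1 - p by ring]
    rw [show ((-1:ℝ)) * (q - 1) = 1 - q by ring]
    push_cast
    rw [show -(2:ℝ) = (-2 : ℝ) from rfl]
    rw [mul_comm ((1+s) ^ ((-2):ℝ)) _, mul_assoc, mul_assoc,
      ← Real.rpow_add h1s, ← Real.rpow_add h1s]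
    ring_nf
  -- Step 5: Ioo integral to interval integral
  have hIoo : (∫ s in Set.Ioo (0:ℝ) r, s ^ (p-1) * (1+s) ^ (-(p+q)))
      = ∫ s in (0:ℝ)..r, s ^ (p-1) * (1+s) ^ (-(p+q)) := by
    rw [intervalIntegral.integral_of_le hr0.le, integral_Ioc_eq_integral_Ioo]
  rw [hmap, hbeta, hofReal, hsubst, hIoo]
end

section
/- Let C₁, C₂, M₁, M₂ > 0 be real numbers, let k₁, k₂ be natural numbers with 0 < k₁ < k₂, let h > 0, and set β₁ = C₁·h^(k₁)·M₁, β₂ = C₂·h^(k₂)·M₂ and h* = (C₁·M₁/(C₂·M₂))^(1/(k₂-k₁)). Let X₁, X₂ be independent real random variables on a probability space, with X₁ uniformly distributed on [0, β₁] and X₂ uniformly distributed on [0, β₂]. Then the probability 𝒫(h) of the event {X₂ ≤ X₁} satisfies: 𝒫(h) = 1 - (1/2)·(h/h*)^(k₂-k₁) if 0 < h ≤ h*, and 𝒫(h) = (1/2)·(h*/h)^(k₂-k₁) if h ≥ h*. -/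
open MeasureTheory ProbabilityTheory intervalIntegral

private lemma unif_le_prob {Ω : Type*} [MeasureSpace Ω] [IsProbabilityMeasure (ℙ : Measure Ω)]
    (a b : ℝ) (ha : 0 < a) (hb : 0 < b)
    (X₁ X₂ : Ω → ℝ) (hm₁ : Measurable X₁) (hm₂ : Measurable X₂)
    (hindep : IndepFun X₁ X₂ ℙ)
    (hX₁ : Measure.map X₁ ℙ = (ENNReal.ofReal a)⁻¹ • volume.restrict (Set.Icc (0:ℝ) a))
    (hX₂ : Measure.map X₂ ℙ = (ENNReal.ofReal b)⁻¹ • volume.restrict (Set.Icc (0:ℝ) b)) :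
    ℙ {ω | X₂ ω ≤ X₁ ω} = ENNReal.ofReal ((∫ x in (0:ℝ)..a, min b x) / (a * b)) := by
  have hmap : Measure.map (fun ω => (X₁ ω, X₂ ω)) ℙ
      = (Measure.map X₁ ℙ).prod (Measure.map X₂ ℙ) :=
    (indepFun_iff_map_prod_eq_prod_map_map hm₁.aemeasurable hm₂.aemeasurable).mp hindep
  have hS : MeasurableSet {p : ℝ × ℝ | p.2 ≤ p.1} :=
    measurableSet_le measurable_snd measurable_fst
  have h1 : ℙ {ω | X₂ ω ≤ X₁ ω}
      = Measure.map (fun ω => (X₁ ω, X₂ ω)) ℙ {p : ℝ × ℝ | p.2 ≤ p.1} := by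
    rw [Measure.map_apply (hm₁.prodMk hm₂) hS]
    rfl
  rw [h1, hmap, hX₁, hX₂]
  rw [Measure.prod_apply hS, lintegral_smul_measure]
  have step : ∫⁻ x in Set.Icc (0:ℝ) a,
        ((ENNReal.ofReal b)⁻¹ • volume.restrict (Set.Icc (0:ℝ) b))
          (Prod.mk x ⁻¹' {p : ℝ × ℝ | p.2 ≤ p.1})
      = (ENNReal.ofReal b)⁻¹ * ∫⁻ x in Set.Icc (0:ℝ) a, ENNReal.ofReal (min b x) := by
    simp_rw [Measure.smul_apply, smul_eq_mul]
    rw [lintegral_const_mul' _ _ (by simp [ENNReal.inv_ne_top, hb, ne_of_gt])]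
    congr 1
    apply setLIntegral_congr_fun measurableSet_Icc
    intro x hx; beta_reduce
    have h2 : Prod.mk x ⁻¹' {p : ℝ × ℝ | p.2 ≤ p.1} = Set.Iic x := rfl
    have h3 : Set.Icc (0:ℝ) b ∩ Set.Iic x = Set.Icc 0 (min b x) := by
      ext y; simp only [Set.mem_inter_iff, Set.mem_Icc, Set.mem_Iic, le_min_iff]; tauto
    rw [h2, Measure.restrict_apply measurableSet_Iic, Set.inter_comm, h3,
      Real.volume_Icc, sub_zero]
  rw [step]
  have hlint : ∫⁻ x in Set.Icc (0:ℝ) a, ENNReal.ofReal (min b x)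
      = ENNReal.ofReal (∫ x in (0:ℝ)..a, min b x) := by
    have hc : Continuous (fun x : ℝ => min b x) := continuous_const.min continuous_id
    rw [← MeasureTheory.ofReal_integral_eq_lintegral_ofReal (f := fun x => min b x)
      hc.integrableOn_Icc
      (by filter_upwards [ae_restrict_mem measurableSet_Icc] with x hx
          exact le_min hb.le hx.1)]
    rw [intervalIntegral.integral_of_le ha.le, MeasureTheory.integral_Icc_eq_integral_Ioc]
  rw [hlint, ← ENNReal.ofReal_inv_of_pos ha, ← ENNReal.ofReal_inv_of_pos hb,
    ← ENNReal.ofReal_mul (by positivity), smul_eq_mul, ← ENNReal.ofReal_mul (by positivity)]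
  congr 1
  field_simp

private lemma min_int_le (a b : ℝ) (ha : 0 ≤ a) (hab : a ≤ b) :
    ∫ x in (0:ℝ)..a, min b x = a^2/2 := by
  rw [intervalIntegral.integral_congr (g := fun x => x)
    (fun x hx => by
      rw [Set.uIcc_of_le ha] at hx
      exact min_eq_right (hx.2.trans hab))]
  simpa using integral_id (a := 0) (b := a)

private lemma min_int_ge (a b : ℝ) (hb : 0 ≤ b) (hab : b ≤ a) :
    ∫ x in (0:ℝ)..a, min b x = b^2/2 + (a - b)*b := by
  have i1 : IntervalIntegrable (fun x => min b x) volume 0 b :=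
    (continuous_const.min continuous_id).intervalIntegrable _ _
  have i2 : IntervalIntegrable (fun x => min b x) volume b a :=
    (continuous_const.min continuous_id).intervalIntegrable _ _
  rw [← intervalIntegral.integral_add_adjacent_intervals i1 i2]
  congr 1
  · rw [intervalIntegral.integral_congr (g := fun x => x)
      (fun x hx => by
        rw [Set.uIcc_of_le hb] at hx
        exact min_eq_right hx.2)]
    simpa using integral_id (a := 0) (b := b)
  · rw [intervalIntegral.integral_congr (g := fun _ => b)
      (fun x hx => by
        rw [Set.uIcc_of_le hab] at hx
        exact min_eq_left hx.1)]
    simp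

theorem stmt_15 {Ω : Type*} [MeasureSpace Ω] [IsProbabilityMeasure (ℙ : Measure Ω)]
    (C₁ C₂ M₁ M₂ : ℝ) (hC₁ : 0 < C₁) (hC₂ : 0 < C₂) (hM₁ : 0 < M₁) (hM₂ : 0 < M₂)
    (k₁ k₂ : ℕ) (hk₁ : 0 < k₁) (hk : k₁ < k₂) (h : ℝ) (hh : 0 < h)
    (β₁ β₂ hstar : ℝ)
    (hβ₁_def : β₁ = C₁ * h ^ k₁ * M₁) (hβ₂_def : β₂ = C₂ * h ^ k₂ * M₂)
    (hstar_def : hstar = (C₁ * M₁ / (C₂ * M₂)) ^ ((1:ℝ) / ((k₂:ℝ) - (k₁:ℝ))))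
    (X₁ X₂ : Ω → ℝ) (hm₁ : Measurable X₁) (hm₂ : Measurable X₂)
    (hindep : IndepFun X₁ X₂ ℙ)
    (hX₁ : Measure.map X₁ ℙ = (ENNReal.ofReal β₁)⁻¹ • volume.restrict (Set.Icc (0:ℝ) β₁))
    (hX₂ : Measure.map X₂ ℙ = (ENNReal.ofReal β₂)⁻¹ • volume.restrict (Set.Icc (0:ℝ) β₂)) :
    (h ≤ hstar →
      ℙ {ω | X₂ ω ≤ X₁ ω} = ENNReal.ofReal (1 - (1/2) * (h / hstar) ^ (k₂ - k₁))) ∧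
    (hstar ≤ h →
      ℙ {ω | X₂ ω ≤ X₁ ω} = ENNReal.ofReal ((1/2) * (hstar / h) ^ (k₂ - k₁))) := by
  have hβ₁ : 0 < β₁ := by rw [hβ₁_def]; positivity
  have hβ₂ : 0 < β₂ := by rw [hβ₂_def]; positivity
  have hr : 0 < C₁ * M₁ / (C₂ * M₂) := by positivity
  have hst : 0 < hstar := by rw [hstar_def]; positivity
  have hcast : ((k₂:ℝ) - (k₁:ℝ)) = ((k₂ - k₁ : ℕ) : ℝ) := by
    push_cast [Nat.cast_sub hk.le]; ring
  have hne : ((k₂ - k₁ : ℕ) : ℝ) ≠ 0 := by simp; omega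
  have hpow : hstar ^ (k₂ - k₁) = C₁ * M₁ / (C₂ * M₂) := by
    rw [hstar_def, hcast, ← Real.rpow_natCast _ (k₂ - k₁), ← Real.rpow_mul hr.le,
      one_div, inv_mul_cancel₀ hne, Real.rpow_one]
  have hsplit : h ^ k₂ = h ^ k₁ * h ^ (k₂ - k₁) := by
    rw [← pow_add]; congr 1; omega
  have ratio1 : (h / hstar) ^ (k₂ - k₁) = β₂ / β₁ := by
    rw [div_pow, hpow, hβ₁_def, hβ₂_def, hsplit]; field_simp
  have ratio2 : (hstar / h) ^ (k₂ - k₁) = β₁ / β₂ := by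
    rw [div_pow, hpow, hβ₁_def, hβ₂_def, hsplit]; field_simp
  have key := unif_le_prob β₁ β₂ hβ₁ hβ₂ X₁ X₂ hm₁ hm₂ hindep hX₁ hX₂
  constructor
  · intro hle
    have hba : β₂ ≤ β₁ := by
      have h1 : β₂ / β₁ ≤ 1 := by
        rw [← ratio1]
        exact pow_le_one₀ (by positivity) ((div_le_one hst).mpr hle)
      exact (div_le_one hβ₁).mp h1
    rw [key, min_int_ge β₁ β₂ hβ₂.le hba, ratio1]
    congr 1
    field_simp
    ring
  · intro hle
    have hab : β₁ ≤ β₂ := by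
      have h1 : β₁ / β₂ ≤ 1 := by
        rw [← ratio2]
        exact pow_le_one₀ (by positivity) ((div_le_one hh).mpr hle)
      exact (div_le_one hβ₂).mp h1
    rw [key, min_int_le β₁ β₂ hβ₁.le hab, ratio2]
    congr 1
    field_simp
end
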